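/- Let G be a countable torsion-free locally virtually abelian group, and suppose that G does not contain free abelian subgroups of arbitrarily high finite rank (i.e., there is a maximal k ∈ ℕ such that G has a subgroup isomorphic to ℤ^k). Then G has an abelian subgroup of finite index that is normal and characteristic in G. -/

import Mathlib

/-- A group is *virtually abelian* if it has an abelian subgroup of finite index. -/
def VirtuallyAbelian (G : Type*) [Group G] : Prop :=
  ∃ A : Subgroup G, IsMulCommutative A ∧ A.FiniteIndex

/-- Torsion-free monoid, with the old Mathlib meaning (removed from Mathlib). -/
def Monoid.IsTorsionFree (M : Type*) [Monoid M] : Prop :=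
  ∀ g : M, g ≠ 1 → ¬IsOfFinOrder g

/-- A group is *locally virtually abelian* if every finitely generated subgroup is
virtually abelian. -/
def LocallyVirtuallyAbelian (G : Type*) [Group G] : Prop :=
  ∀ H : Subgroup G, Group.FG H → VirtuallyAbelian H

lemma Monoid.IsTorsionFree.subgroup {G : Type*} [Group G] (h : Monoid.IsTorsionFree G)
    (H : Subgroup G) : Monoid.IsTorsionFree H := fun g hg hfin =>
  h g (fun h1 => hg (Subtype.ext h1)) ((Submonoid.isOfFinOrder_coe (H := H.toSubmonoid)).mpr hfin)

open Finset
open scoped IsMulCommutative commutatorElement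
set_option linter.unusedSectionVars false
variable {ι : Type} [Fintype ι] [DecidableEq ι]

lemma mul_natCast_entry (X : Matrix ι ι ℤ) (n : ℕ) (i j : ι) :
    (X * ((n : ℕ) : Matrix ι ι ℤ)) i j = (n : ℤ) * X i j := by
  rw [← (Nat.cast_commute n X).eq, ← nsmul_eq_mul, Matrix.smul_apply, nsmul_eq_mul]

lemma entries_dvd_mul {d e : ℤ} {X Y : Matrix ι ι ℤ} (hX : ∀ i j, d ∣ X i j)
    (hY : ∀ i j, e ∣ Y i j) : ∀ i j, d * e ∣ (X * Y) i j := by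
  intro i j
  rw [Matrix.mul_apply]
  exact Finset.dvd_sum fun l _ => mul_dvd_mul (hX i l) (hY l j)

lemma entries_dvd_pow {d : ℤ} {X : Matrix ι ι ℤ} (hX : ∀ i j, d ∣ X i j) :
    ∀ n i j, d ^ (n + 1) ∣ (X ^ (n + 1)) i j := by
  intro n
  induction n with
  | zero => simpa using hX
  | succ m ih =>
      intro i j
      rw [pow_succ X (m + 1)]
      have := entries_dvd_mul ih hX i j
      rwa [← pow_succ] at this

lemma descent {p : ℕ} (hp : p.Prime) {X : Matrix ι ι ℤ} (hbin : (X + 1) ^ p = 1)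
    {a : ℕ} (ha : 1 ≤ a) (hdvd : ∀ i j, (3:ℤ) ^ a ∣ X i j) :
    ∀ i j, (3:ℤ) ^ (a + 1) ∣ X i j := by
  have hb := (Commute.one_right X).add_pow p
  rw [hbin] at hb
  simp only [one_pow, mul_one] at hb
  have h2 : ∑ m ∈ range (p + 1), X ^ m * (p.choose m : Matrix ι ι ℤ) = 1 := hb.symm
  rw [Finset.sum_range_succ'] at h2
  simp only [pow_zero, Nat.choose_zero_right, Nat.cast_one, mul_one] at h2
  obtain ⟨q, hq⟩ : ∃ q, p = q + 1 := ⟨p - 1, (Nat.succ_pred_eq_of_pos hp.pos).symm⟩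
  subst hq
  rw [Finset.sum_range_succ'] at h2
  simp only [zero_add, pow_one, Nat.choose_one_right] at h2
  have h3 : X * (((q+1 : ℕ)) : Matrix ι ι ℤ)
      = -∑ k ∈ range q, X ^ (k + 1 + 1) * (((q + 1).choose (k + 1 + 1) : ℕ) : Matrix ι ι ℤ) := by
    have h4 : (∑ k ∈ range q, X ^ (k + 1 + 1) * (((q + 1).choose (k + 1 + 1) : ℕ) : Matrix ι ι ℤ))
        + X * (((q+1 : ℕ)) : Matrix ι ι ℤ) = 0 := by
      have := congrArg (fun M => M - 1) h2
      simpa using this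
    exact eq_neg_of_add_eq_zero_right h4
  intro i j
  by_cases h3p : q + 1 = 3
  · -- p = 3
    have hq2 : q = 2 := by omega
    subst hq2
    have e1 : ((2+1 : ℕ) : ℤ) * X i j
        = -((3 : ℤ) * (X ^ 2) i j + (1 : ℤ) * (X ^ 3) i j) := by
      rw [← mul_natCast_entry X (2+1) i j, h3, Matrix.neg_apply, Matrix.sum_apply]
      rw [Finset.sum_range_succ, Finset.sum_range_one]
      rw [show (0:ℕ) + 1 + 1 = 2 by rfl, show (1:ℕ) + 1 + 1 = 3 by rfl]
      rw [show Nat.choose 3 2 = 3 from by decide, show Nat.choose 3 3 = 1 from by decide]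
      rw [mul_natCast_entry, mul_natCast_entry]
      push_cast
      ring
    have hX2 : ((3:ℤ) ^ a) ^ 2 ∣ (X ^ 2) i j := entries_dvd_pow hdvd 1 i j
    have hX3 : ((3:ℤ) ^ a) ^ 3 ∣ (X ^ 3) i j := entries_dvd_pow hdvd 2 i j
    have t1 : (3:ℤ) ^ (a + 2) ∣ (3 : ℤ) * (X ^ 2) i j := by
      have h21 : (3:ℤ) ^ (2*a+1) ∣ (3 : ℤ) * (X ^ 2) i j := by
        rw [pow_succ']
        exact mul_dvd_mul dvd_rfl (by rwa [← pow_mul, mul_comm a 2] at hX2)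
      exact dvd_trans (pow_dvd_pow 3 (show a + 2 ≤ 2*a+1 by omega)) h21
    have t2 : (3:ℤ) ^ (a + 2) ∣ (1 : ℤ) * (X ^ 3) i j := by
      rw [one_mul]
      exact dvd_trans (pow_dvd_pow 3 (show a + 2 ≤ a*3 by omega)) (by rwa [← pow_mul] at hX3)
    have t3 : (3:ℤ) ^ (a + 2) ∣ ((2+1 : ℕ) : ℤ) * X i j := by
      rw [e1]
      exact dvd_neg.mpr (dvd_add t1 t2)
    have t4 : (3:ℤ) * (3:ℤ) ^ (a + 1) ∣ (3:ℤ) * X i j := by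
      rw [← pow_succ']
      exact_mod_cast t3
    exact (mul_dvd_mul_iff_left (by norm_num : (3:ℤ) ≠ 0)).mp t4
  · -- p ≠ 3
    have hterm : ∀ k, (3:ℤ) ^ (2 * a) ∣
        (X ^ (k + 1 + 1) * (((q + 1).choose (k + 1 + 1) : ℕ) : Matrix ι ι ℤ)) i j := by
      intro k
      have hpowdvd : ((3:ℤ) ^ a) ^ (k + 1 + 1) ∣ (X ^ (k + 1 + 1)) i j := entries_dvd_pow hdvd _ i j
      have h2a : (3:ℤ) ^ (2 * a) ∣ (X ^ (k + 1 + 1)) i j := by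
        refine dvd_trans ?_ hpowdvd
        rw [← pow_mul]
        exact pow_dvd_pow 3 (by nlinarith)
      rw [mul_natCast_entry]
      exact Dvd.dvd.mul_left h2a _
    have hmain : (3:ℤ) ^ (2 * a) ∣ ((q + 1 : ℕ) : ℤ) * X i j := by
      rw [← mul_natCast_entry X (q+1) i j, h3, Matrix.neg_apply, Matrix.sum_apply]
      exact dvd_neg.mpr (Finset.dvd_sum fun k _ => hterm k)
    have hco : IsCoprime ((3:ℤ) ^ (2 * a)) ((q + 1 : ℕ) : ℤ) := by
      have hnc : Nat.Coprime 3 (q + 1) :=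
        (Nat.coprime_primes Nat.prime_three hp).mpr (fun h => h3p h.symm)
      have : IsCoprime ((3:ℕ) : ℤ) ((q + 1 : ℕ) : ℤ) := Int.isCoprime_iff_gcd_eq_one.mpr (by
        rw [Int.gcd_natCast_natCast]; exact hnc)
      exact IsCoprime.pow_left (by exact_mod_cast this)
    exact dvd_trans (pow_dvd_pow 3 (show a + 1 ≤ 2*a by omega)) (hco.dvd_of_dvd_mul_left hmain)

lemma int_eq_zero_of_all_pow_dvd {x : ℤ} (h : ∀ a : ℕ, (3:ℤ) ^ a ∣ x) : x = 0 := by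
  by_contra hx
  have h1 : (3:ℤ) ^ (x.natAbs) ≤ |x| :=
    Int.le_of_dvd (abs_pos.mpr hx) ((dvd_abs _ _).mpr (h x.natAbs))
  have h2 : (x.natAbs : ℤ) < (3:ℤ) ^ (x.natAbs) := by
    have := Nat.lt_pow_self (n := x.natAbs) (by norm_num : 1 < 3)
    exact_mod_cast this
  rw [Int.abs_eq_natAbs] at h1
  omega

lemma prime_case {p : ℕ} (hp : p.Prime) {A : Matrix ι ι ℤ} (hA : A ^ p = 1)
    (h3 : ∀ i j, (3:ℤ) ∣ (A - 1) i j) : A = 1 := by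
  have hbin : ((A - 1) + 1) ^ p = 1 := by rwa [sub_add_cancel]
  have key : ∀ a : ℕ, ∀ i j, (3:ℤ) ^ (a + 1) ∣ (A - 1) i j := by
    intro a
    induction a with
    | zero => simpa using h3
    | succ b ih => exact descent hp hbin (by omega) ih
  have hzero : A - 1 = 0 := by
    ext i j
    have : ∀ a : ℕ, (3:ℤ) ^ a ∣ (A - 1) i j := by
      intro a
      exact dvd_trans (pow_dvd_pow 3 (Nat.le_succ a)) (key a i j)
    simpa using int_eq_zero_of_all_pow_dvd this
  rw [sub_eq_zero] at hzero
  exact hzero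

lemma pow_sub_one_entries {A : Matrix ι ι ℤ} (h3 : ∀ i j, (3:ℤ) ∣ (A - 1) i j) :
    ∀ (q : ℕ) i j, (3:ℤ) ∣ (A ^ q - 1) i j := by
  intro q
  induction q with
  | zero => simp
  | succ m ih =>
      intro i j
      have hsplit : A ^ (m + 1) - 1 = A ^ m * (A - 1) + (A ^ m - 1) := by
        rw [pow_succ]; noncomm_ring
      rw [hsplit, Matrix.add_apply]
      refine dvd_add ?_ (ih i j)
      rw [Matrix.mul_apply]
      exact Finset.dvd_sum fun l _ => Dvd.dvd.mul_left (h3 l j) _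

lemma minkowski_matrix {A : Matrix ι ι ℤ} {n : ℕ} (hn : n ≠ 0) (hA : A ^ n = 1)
    (h3 : ∀ i j, (3:ℤ) ∣ (A - 1) i j) : A = 1 := by
  induction n using Nat.strong_induction_on generalizing A with
  | _ n ih =>
    rcases eq_or_ne n 1 with rfl | hn1
    · simpa using hA
    · have h2 : 2 ≤ n := by omega
      set p := n.minFac with hpdef
      have hp : p.Prime := Nat.minFac_prime hn1
      have hdvd : p ∣ n := Nat.minFac_dvd n
      have hB : (A ^ (n / p)) ^ p = 1 := by
        rw [← pow_mul, Nat.div_mul_cancel hdvd, hA]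
      have hB3 : ∀ i j, (3:ℤ) ∣ (A ^ (n / p) - 1) i j := pow_sub_one_entries h3 (n / p)
      have hBeq : A ^ (n / p) = 1 := prime_case hp hB hB3
      have hlt : n / p < n := Nat.div_lt_self (by omega) hp.two_le
      have hne : n / p ≠ 0 := by
        have := Nat.div_pos (Nat.le_of_dvd (by omega) hdvd) hp.pos
        omega
      exact ih (n / p) hlt hne hBeq h3

section AutBound

variable {j : ℕ}

/-- From a multiplicative automorphism of `Multiplicative (Fin j → ℤ)` to an additive
automorphism of `Fin j → ℤ`. -/
def mulAutToAddAut : MulAut (Multiplicative (Fin j → ℤ)) →* Multiplicative (AddAut (Fin j → ℤ)) :=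
  (MulAutMultiplicative _).toMonoidHom

lemma mulAutToAddAut_injective : Function.Injective (mulAutToAddAut (j := j)) := by
  intro a b h
  unfold mulAutToAddAut at h
  simpa using h

/-- From an additive automorphism of `Fin j → ℤ` to an invertible integer matrix. -/
def addAutToMatrix : Multiplicative (AddAut (Fin j → ℤ)) →* (Matrix (Fin j) (Fin j) ℤ)ˣ :=
  MonoidHom.mk' (fun a =>
    { val := LinearMap.toMatrix' a.toAdd.toAddMonoidHom.toIntLinearMap
      inv := LinearMap.toMatrix' a.toAdd.symm.toAddMonoidHom.toIntLinearMap
      val_inv := by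
        rw [← LinearMap.toMatrix'_comp]
        have : (a.toAdd.toAddMonoidHom.toIntLinearMap ∘ₗ a.toAdd.symm.toAddMonoidHom.toIntLinearMap)
            = LinearMap.id := by
          ext x i
          simp
        rw [this, LinearMap.toMatrix'_id]
      inv_val := by
        rw [← LinearMap.toMatrix'_comp]
        have : (a.toAdd.symm.toAddMonoidHom.toIntLinearMap ∘ₗ a.toAdd.toAddMonoidHom.toIntLinearMap)
            = LinearMap.id := by
          ext x i
          simp
        rw [this, LinearMap.toMatrix'_id] })
    (by
      intro a b
      ext : 1
      simp only [Units.val_mul]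
      rw [← LinearMap.toMatrix'_comp]
      congr 1)

lemma addAutToMatrix_injective : Function.Injective (addAutToMatrix (j := j)) := by
  intro a b h
  have h1 : LinearMap.toMatrix' a.toAdd.toAddMonoidHom.toIntLinearMap
      = LinearMap.toMatrix' b.toAdd.toAddMonoidHom.toIntLinearMap := congrArg Units.val h
  have h2 := LinearMap.toMatrix'.injective h1
  refine Multiplicative.toAdd.injective (AddEquiv.ext fun x => ?_)
  exact LinearMap.ext_iff.mp h2 x

/-- reduction mod 3 on invertible integer matrices -/
def redMod3 : (Matrix (Fin j) (Fin j) ℤ)ˣ →* (Matrix (Fin j) (Fin j) (ZMod 3))ˣ :=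
  Units.map ((Int.castRingHom (ZMod 3)).mapMatrix.toMonoidHom)

lemma eq_one_of_finOrder_redMod3 (u : (Matrix (Fin j) (Fin j) ℤ)ˣ) {n : ℕ} (hn : n ≠ 0)
    (hu : u ^ n = 1) (hred : redMod3 u = 1) : u = 1 := by
  have hA : (u.val) ^ n = 1 := by
    have := congrArg Units.val hu
    simpa [Units.val_pow_eq_pow_val] using this
  have h3 : ∀ i j', (3:ℤ) ∣ (u.val - 1) i j' := by
    intro i j'
    have hval : ((Int.castRingHom (ZMod 3)).mapMatrix u.val) = 1 := congrArg Units.val hred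
    have hentry : ((u.val i j' : ℤ) : ZMod 3) = (1 : Matrix (Fin j) (Fin j) (ZMod 3)) i j' := by
      have := congrArg (fun M : Matrix (Fin j) (Fin j) (ZMod 3) => M i j') hval
      simpa [RingHom.mapMatrix_apply, Matrix.map_apply] using this
    have h1e : ((1 : Matrix (Fin j) (Fin j) (ZMod 3)) i j')
        = (((1 : Matrix (Fin j) (Fin j) ℤ) i j' : ℤ) : ZMod 3) := by
      by_cases hij : i = j' <;> simp [Matrix.one_apply, hij]
    rw [h1e] at hentry
    have : (((u.val - 1) i j' : ℤ) : ZMod 3) = 0 := by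
      rw [Matrix.sub_apply]
      push_cast
      rw [hentry]
      ring
    exact (ZMod.intCast_zmod_eq_zero_iff_dvd _ 3).mp this
  exact Units.ext (minkowski_matrix hn hA h3)

/-- Any torsion group that embeds into `MulAut (Multiplicative (Fin j → ℤ))`
has cardinality at most `3 ^ (j*j)`. -/
lemma card_le_of_torsion_into_aut {Q : Type*} [Group Q]
    (ρ : Q →* MulAut (Multiplicative (Fin j → ℤ))) (hinj : Function.Injective ρ)
    (htors : ∀ q : Q, IsOfFinOrder q) : Finite Q ∧ Nat.card Q ≤ 3 ^ (j * j) := by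
  classical
  set χ : Q →* (Matrix (Fin j) (Fin j) (ZMod 3))ˣ :=
    redMod3.comp ((addAutToMatrix.comp mulAutToAddAut).comp ρ) with hχ
  have hchi_inj : Function.Injective χ := by
    rw [injective_iff_map_eq_one]
    intro q hq
    set u := addAutToMatrix (mulAutToAddAut (ρ q)) with hu
    have hord : orderOf q ≠ 0 := (htors q).orderOf_pos.ne'
    have hupow : u ^ orderOf q = 1 := by
      rw [hu, ← map_pow, ← map_pow, ← map_pow, pow_orderOf_eq_one, map_one, map_one, map_one]
    have := eq_one_of_finOrder_redMod3 u hord hupow hq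
    have h1 : ρ q = 1 := mulAutToAddAut_injective (addAutToMatrix_injective (by simpa using this))
    exact hinj (by rw [h1, map_one])
  refine ⟨Finite.of_injective χ hchi_inj, ?_⟩
  have hle1 : Nat.card Q ≤ Nat.card ((Matrix (Fin j) (Fin j) (ZMod 3))ˣ) :=
    Nat.card_le_card_of_injective χ hchi_inj
  have hle2 : Nat.card ((Matrix (Fin j) (Fin j) (ZMod 3))ˣ)
      ≤ Nat.card (Fin j → Fin j → ZMod 3) := by
    refine Nat.card_le_card_of_injective (fun u => fun i j' => u.val i j') ?_
    intro u v huv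
    refine Units.ext (Matrix.ext fun i j' => ?_)
    exact congrFun (congrFun huv i) j'
  have hcard : Nat.card (Fin j → Fin j → ZMod 3) = 3 ^ (j * j) := by
    rw [Nat.card_eq_fintype_card, Fintype.card_fun, Fintype.card_fun, ZMod.card,
      Fintype.card_fin, ← pow_mul]
  omega

end AutBound

section GroupHelpers

/-- A torsion-free group whose center has finite index is commutative (via the transfer map). -/
lemma mul_comm_of_center_finiteIndex {K : Type*} [Group K] (htf : Monoid.IsTorsionFree K)
    (hfi : (Subgroup.center K).FiniteIndex) : ∀ a b : K, a * b = b * a := by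
  intro a b
  haveI := hfi
  set φ := MonoidHom.transferCenterPow K with hφ
  have hn : (Subgroup.center K).index ≠ 0 := hfi.index_ne_zero
  have hc : (⁅a, b⁆ : K) ^ (Subgroup.center K).index = 1 := by
    have h1 : (φ ⁅a, b⁆ : K) = ⁅a, b⁆ ^ (Subgroup.center K).index :=
      MonoidHom.transferCenterPow_apply ⁅a, b⁆
    have h2 : φ ⁅a, b⁆ = ⁅φ a, φ b⁆ := map_commutatorElement φ a b
    have h3 : ⁅φ a, φ b⁆ = 1 := commutatorElement_eq_one_iff_commute.mpr (mul_comm _ _)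
    rw [← h1, h2, h3]
    rfl
  by_contra hne
  have hfin : IsOfFinOrder (⁅a, b⁆ : K) :=
    isOfFinOrder_iff_pow_eq_one.mpr ⟨_, Nat.pos_of_ne_zero hn, hc⟩
  have h1 : (⁅a, b⁆ : K) ≠ 1 := by
    intro h
    exact hne (commutatorElement_eq_one_iff_commute.mp h).eq
  exact htf _ h1 hfin

/-- Every finitely generated torsion-free commutative group is free abelian of finite rank. -/
lemma struct_fg_torsionFree {N : Type*} [CommGroup N] (hfg : Group.FG N)
    (htf : Monoid.IsTorsionFree N) : ∃ j : ℕ, Nonempty (N ≃* Multiplicative (Fin j → ℤ)) := by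
  haveI : AddGroup.FG (Additive N) := GroupFG.iff_add_fg.mp hfg
  haveI : Module.Finite ℤ (Additive N) := Module.Finite.iff_addGroup_fg.mpr ‹_›
  haveI : NoZeroSMulDivisors ℤ (Additive N) := by
    have : IsAddTorsionFree (Additive N) := IsAddTorsionFree.of_not_isOfFinAddOrder
      (fun x hx hfin => htf x.toMul (by simpa using hx) (isOfFinAddOrder_ofMul_iff.mp hfin))
    infer_instance
  haveI : Module.Free ℤ (Additive N) := Module.free_of_finite_type_torsion_free'
  classical
  let ι := Module.Free.ChooseBasisIndex ℤ (Additive N)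
  let b : Module.Basis ι ℤ (Additive N) := Module.Free.chooseBasis ℤ (Additive N)
  let eι : ι ≃ Fin (Fintype.card ι) := Fintype.equivFin ι
  let e1 : Additive N ≃ₗ[ℤ] (ι → ℤ) := b.equivFun
  let e2 : (ι → ℤ) ≃ₗ[ℤ] (Fin (Fintype.card ι) → ℤ) := LinearEquiv.funCongrLeft ℤ ℤ eι.symm
  refine ⟨Fintype.card ι, ⟨?_⟩⟩
  exact (MulEquiv.multiplicativeAdditive N).symm.trans
    (AddEquiv.toMultiplicative ((e1.trans e2).toAddEquiv))

/-- The closure of a set of pairwise commuting elements is a commutative subgroup. -/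
lemma closure_isCommutative_of_comm {G : Type*} [Group G] (S : Set G)
    (h : ∀ x ∈ S, ∀ y ∈ S, x * y = y * x) : IsMulCommutative (Subgroup.closure S) := by
  have hle : Subgroup.closure S ≤ Subgroup.centralizer (Subgroup.closure S : Set G) := by
    rw [Subgroup.closure_le]
    intro s hs
    rw [SetLike.mem_coe, Subgroup.mem_centralizer_iff]
    intro g hg
    induction hg using Subgroup.closure_induction with
    | mem y hy => exact h y hy s hs
    | one => simp
    | mul y z _ _ hy hz => rw [mul_assoc, hz, ← mul_assoc, hy, mul_assoc]
    | inv y _ hy =>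
        have : s * y = y * s := hy.symm
        calc y⁻¹ * s = y⁻¹ * s * y * y⁻¹ := by group
        _ = y⁻¹ * (s * y) * y⁻¹ := by group
        _ = y⁻¹ * (y * s) * y⁻¹ := by rw [this]
        _ = s * y⁻¹ := by group
  constructor
  constructor
  intro a b
  have := hle b.2
  rw [Subgroup.mem_centralizer_iff] at this
  exact Subtype.ext (this a a.2)

end GroupHelpers

section Dich

open Subgroup

/-- If a commutative f.g. subgroup `N` contains a copy `C₀` of `ℤ^k` and the ambient group
has no subgroup isomorphic to `ℤ^(k+1)`, then `C₀` has finite index in `N`. -/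
lemma relIndex_ne_zero_of_maxrank {F : Type*} [Group F] {k : ℕ}
    (hmax : ∀ m : ℕ, (∃ H : Subgroup F, Nonempty (H ≃* Multiplicative (Fin m → ℤ))) → m ≤ k)
    {N C₀ : Subgroup F} (hNc : IsMulCommutative N) (hNfg : Group.FG ↥N)
    (hC₀N : C₀ ≤ N) (hiso : Nonempty (↥C₀ ≃* Multiplicative (Fin k → ℤ))) :
    C₀.relIndex N ≠ 0 := by
  haveI := hNc
  haveI := hNfg
  by_contra h0
  set D := C₀.subgroupOf N with hD
  have hDind : D.index = 0 := h0
  set Q := ↥N ⧸ D with hQ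
  have hQinf : Infinite Q := by
    have h1 : Nat.card Q = 0 := hDind
    rcases Nat.card_eq_zero.mp h1 with h | h
    · exact (h.false (1 : Q)).elim
    · exact h
  haveI : Group.FG Q := by
    exact Group.fg_of_surjective (f := QuotientGroup.mk' D) (QuotientGroup.mk'_surjective D)
  have hnottors : ¬ (∀ q : Q, IsOfFinOrder q) := by
    intro hall
    have hfin : Finite Q := CommGroup.finite_of_fg_torsion Q hall
    exact absurd hfin (by simpa using (inferInstance : Infinite Q).not_finite)
  push_neg at hnottors
  obtain ⟨q, hq⟩ := hnottors
  obtain ⟨b', rfl⟩ := QuotientGroup.mk'_surjective D q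
  have hbp : ∀ m : ℤ, (b' : F) ^ m ∈ C₀ → m = 0 := by
    intro m hmem
    by_contra hm
    apply hq
    refine isOfFinOrder_iff_zpow_eq_one.mpr ⟨m, hm, ?_⟩
    have hb'm : b' ^ m ∈ D := by
      rw [hD, Subgroup.mem_subgroupOf]
      simpa [SubgroupClass.coe_zpow] using hmem
    rw [← map_zpow]
    exact (QuotientGroup.eq_one_iff _).mpr hb'm
  obtain ⟨eC⟩ := hiso
  set ι : Multiplicative (Fin k → ℤ) →* F := C₀.subtype.comp eC.symm.toMonoidHom with hι
  have hιmem : ∀ v, ι v ∈ C₀ := fun v => (eC.symm v).2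
  have hιinj : Function.Injective ι := by
    intro v w hvw
    exact eC.symm.injective (Subtype.ext hvw)
  -- all relevant elements lie in the commutative subgroup N
  have hcommN : ∀ u v : F, u ∈ N → v ∈ N → u * v = v * u := fun u v hu hv =>
    Subgroup.mul_comm_of_mem_isMulCommutative N hu hv
  set res : (Fin (k+1) → ℤ) → (Fin k → ℤ) := fun f => f ∘ Fin.castSucc with hres
  set Φ : Multiplicative (Fin (k+1) → ℤ) →* F := MonoidHom.mk'
    (fun f => ι (Multiplicative.ofAdd (res f.toAdd)) * (b' : F) ^ (f.toAdd (Fin.last k)))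
    (by
      intro f g
      have h1 : res ((f*g).toAdd) = res f.toAdd + res g.toAdd := rfl
      have h2 : Multiplicative.ofAdd (res f.toAdd + res g.toAdd)
          = Multiplicative.ofAdd (res f.toAdd) * Multiplicative.ofAdd (res g.toAdd) := rfl
      rw [h1, h2, map_mul]
      have h3 : ((f*g).toAdd) (Fin.last k) = f.toAdd (Fin.last k) + g.toAdd (Fin.last k) := rfl
      rw [h3, zpow_add]
      -- rearrange using commutativity inside N
      have hb : (b' : F) ∈ N := b'.2
      have hcm : (b' : F) ^ (f.toAdd (Fin.last k)) * ι (Multiplicative.ofAdd (res g.toAdd))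
          = ι (Multiplicative.ofAdd (res g.toAdd)) * (b' : F) ^ (f.toAdd (Fin.last k)) :=
        hcommN _ _ (N.zpow_mem hb _) (hC₀N (hιmem _))
      rw [mul_assoc, mul_assoc, ← mul_assoc ((b' : F) ^ (f.toAdd (Fin.last k))), hcm,
        mul_assoc]) with hΦ
  have hΦinj : Function.Injective Φ := by
    rw [injective_iff_map_eq_one]
    intro f hf
    have hf' : ι (Multiplicative.ofAdd (res f.toAdd)) * (b' : F) ^ (f.toAdd (Fin.last k)) = 1 := hf
    have hbC : (b' : F) ^ (f.toAdd (Fin.last k)) ∈ C₀ := by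
      have : (b' : F) ^ (f.toAdd (Fin.last k)) = (ι (Multiplicative.ofAdd (res f.toAdd)))⁻¹ := by
        rw [eq_inv_iff_mul_eq_one, ← hf']
        exact hcommN _ _ (N.zpow_mem b'.2 _) (hC₀N (hιmem _))
      rw [this]
      exact C₀.inv_mem (hιmem _)
    have hlast : f.toAdd (Fin.last k) = 0 := hbp _ hbC
    have hres0 : ι (Multiplicative.ofAdd (res f.toAdd)) = 1 := by
      rw [hlast] at hf'
      simpa using hf'
    have : Multiplicative.ofAdd (res f.toAdd) = 1 := hιinj (by rw [hres0, map_one])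
    have hres0' : res f.toAdd = 0 := this
    -- conclude f = 1
    have : f.toAdd = 0 := by
      funext i
      refine Fin.lastCases ?_ ?_ i
      · exact hlast
      · intro i'
        exact congrFun hres0' i'
    exact this
  have hcontr := hmax (k+1) ⟨Φ.range, ⟨(MonoidHom.ofInjective hΦinj).symm⟩⟩
  omega

end Dich

section Main

open Subgroup

lemma main_lemma {F : Type*} [Group F] (hfg : Group.FG F) (htf : Monoid.IsTorsionFree F)
    (hva : VirtuallyAbelian F) (k : ℕ)
    (hmax : ∀ m : ℕ, (∃ H : Subgroup F, Nonempty (H ≃* Multiplicative (Fin m → ℤ))) → m ≤ k) :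
    ∃ C : Subgroup F, IsMulCommutative C ∧ C.index ≠ 0 ∧ C.index ≤ 3 ^ (k * k) ∧
      ∀ B : Subgroup F, IsMulCommutative B →
        (∃ H : Subgroup F, H ≤ B ∧ Nonempty (H ≃* Multiplicative (Fin k → ℤ))) → B ≤ C := by
  classical
  haveI := hfg
  obtain ⟨B₀, hB₀c, hB₀fi⟩ := hva
  haveI := hB₀c
  haveI := hB₀fi
  set N := B₀.normalCore with hNdef
  haveI hNnormal : N.Normal := inferInstance
  haveI hNfi : N.FiniteIndex := inferInstance
  have hNle : N ≤ B₀ := B₀.normalCore_le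
  have hNc : IsMulCommutative N := by
    constructor; constructor
    intro a b
    exact Subtype.ext (Subgroup.mul_comm_of_mem_isMulCommutative B₀ (hNle a.2) (hNle b.2))
  haveI := hNc
  haveI hNfg : Group.FG ↥N := inferInstance
  have hcommN : ∀ u v : F, u ∈ N → v ∈ N → u * v = v * u := fun u v hu hv =>
    Subgroup.mul_comm_of_mem_isMulCommutative N hu hv
  set C := Subgroup.centralizer (N : Set F) with hCdef
  have hNleC : N ≤ C := by
    intro n hn
    rw [Subgroup.mem_centralizer_iff]
    intro g hg
    exact hcommN g n hg hn
  have hn₀ : N.index ≠ 0 := hNfi.index_ne_zero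
  -- the key containment property
  have hBle : ∀ B : Subgroup F, IsMulCommutative B →
      (∃ H : Subgroup F, H ≤ B ∧ Nonempty (H ≃* Multiplicative (Fin k → ℤ))) → B ≤ C := by
    rintro B hBc ⟨H, hHB, ⟨e⟩⟩ x hx
    haveI := hBc
    have hHc : IsMulCommutative H := by
      constructor; constructor
      intro a b
      exact Subtype.ext (Subgroup.mul_comm_of_mem_isMulCommutative B (hHB a.2) (hHB b.2))
    haveI := hHc
    -- C₀ : n₀-th powers of H
    set ψ : ↥H →* F := H.subtype.comp (powMonoidHom N.index) with hψdef
    set C₀ := ψ.range with hC₀def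
    have hψinj : Function.Injective ψ := by
      rw [injective_iff_map_eq_one]
      intro h hh
      have : ((h : F)) ^ N.index = 1 := hh
      by_contra hne
      have hne' : (h : F) ≠ 1 := fun hc => hne (Subtype.ext hc)
      exact htf _ hne' (isOfFinOrder_iff_pow_eq_one.mpr ⟨_, Nat.pos_of_ne_zero hn₀, this⟩)
    have hC₀iso : Nonempty (↥C₀ ≃* Multiplicative (Fin k → ℤ)) :=
      ⟨((MonoidHom.ofInjective hψinj).symm.trans e)⟩
    have hC₀N : C₀ ≤ N := by
      rintro _ ⟨h, rfl⟩
      exact N.pow_index_mem (h : F)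
    have hC₀B : C₀ ≤ B := by
      rintro _ ⟨h, rfl⟩
      exact B.pow_mem (hHB h.2) N.index
    have hrel : C₀.relIndex N ≠ 0 :=
      relIndex_ne_zero_of_maxrank hmax hNc hNfg hC₀N hC₀iso
    have hrelBN : (B ⊓ N).relIndex N ≠ 0 := by
      intro hz
      apply hrel
      rw [← Subgroup.relIndex_mul_relIndex C₀ (B ⊓ N) N (le_inf hC₀B hC₀N) inf_le_right, hz,
        mul_zero]
    -- K := closure {x} ∪ H ∪ N
    set K := Subgroup.closure ({x} ∪ ((H : Set F) ∪ (N : Set F))) with hKdef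
    have hSsub : ({x} ∪ ((H : Set F) ∪ (N : Set F))) ⊆ (K : Set F) := Subgroup.subset_closure
    have hxK : x ∈ K := hSsub (Or.inl rfl)
    have hHK : H ≤ K := fun h hh => hSsub (Or.inr (Or.inl hh))
    have hNK : N ≤ K := fun n hn => hSsub (Or.inr (Or.inr hn))
    -- B ⊓ N is central in K
    have hZ : (B ⊓ N).subgroupOf K ≤ Subgroup.center ↥K := by
      intro z hz
      rw [Subgroup.mem_subgroupOf] at hz
      rw [Subgroup.mem_center_iff]
      intro g
      have hcent : Subgroup.closure ({x} ∪ ((H : Set F) ∪ (N : Set F)))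
          ≤ Subgroup.centralizer {(z : F)} := by
        rw [Subgroup.closure_le]
        rintro s (rfl | hs | hs)
        · rw [SetLike.mem_coe, Subgroup.mem_centralizer_iff]
          rintro g (rfl : g = (z : F))
          exact Subgroup.mul_comm_of_mem_isMulCommutative B hz.1 hx
        · rw [SetLike.mem_coe, Subgroup.mem_centralizer_iff]
          rintro g (rfl : g = (z : F))
          exact Subgroup.mul_comm_of_mem_isMulCommutative B hz.1 (hHB hs)
        · rw [SetLike.mem_coe, Subgroup.mem_centralizer_iff]
          rintro g (rfl : g = (z : F))
          exact hcommN _ _ hz.2 hs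
      have := hcent g.2
      rw [Subgroup.mem_centralizer_iff] at this
      exact Subtype.ext ((this (z : F) rfl).symm)
    -- center of K has finite index
    have hrelK : (B ⊓ N).relIndex K ≠ 0 := by
      have h1 : N.relIndex K ≠ 0 := by
        intro hz
        apply hn₀
        exact Nat.eq_zero_of_zero_dvd (hz ▸ Subgroup.relIndex_dvd_index_of_normal N K)
      intro hz
      rw [← Subgroup.relIndex_mul_relIndex (B ⊓ N) N K inf_le_right hNK] at hz
      rcases Nat.mul_eq_zero.mp hz with h | h
      · exact hrelBN h
      · exact h1 h
    have hZfi : (Subgroup.center ↥K).index ≠ 0 := by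
      intro hz
      apply hrelK
      exact Nat.eq_zero_of_zero_dvd (hz ▸ Subgroup.index_dvd_of_le hZ)
    have hKcomm := mul_comm_of_center_finiteIndex (htf.subgroup K) ⟨hZfi⟩
    -- conclude x ∈ C
    rw [hCdef, Subgroup.mem_centralizer_iff]
    intro g hg
    have := hKcomm ⟨g, hNK hg⟩ ⟨x, hxK⟩
    exact congrArg Subtype.val this
  -- C is commutative
  have hCc : IsMulCommutative C := by
    have hcen : N.subgroupOf C ≤ Subgroup.center ↥C := by
      intro z hz
      rw [Subgroup.mem_subgroupOf] at hz
      rw [Subgroup.mem_center_iff]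
      intro g
      have hgC : (g : F) ∈ Subgroup.centralizer (N : Set F) := g.2
      rw [Subgroup.mem_centralizer_iff] at hgC
      exact Subtype.ext ((hgC (z : F) hz).symm)
    have hCfi : (Subgroup.center ↥C).index ≠ 0 := by
      have h1 : N.relIndex C ≠ 0 := by
        intro hz
        apply hn₀
        exact Nat.eq_zero_of_zero_dvd (hz ▸ Subgroup.relIndex_dvd_index_of_normal N C)
      intro hz
      apply h1
      exact Nat.eq_zero_of_zero_dvd (hz ▸ Subgroup.index_dvd_of_le hcen)
    have := mul_comm_of_center_finiteIndex (htf.subgroup C) ⟨hCfi⟩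
    constructor; constructor
    intro a b
    exact this a b
  -- index bound via the automorphism representation
  obtain ⟨j, ⟨eN⟩⟩ := struct_fg_torsionFree hNfg (htf.subgroup N)
  have hjk : j ≤ k := hmax j ⟨N, ⟨eN⟩⟩
  set ρ : F →* MulAut (Multiplicative (Fin j → ℤ)) :=
    (MulAut.congr eN).toMonoidHom.comp (MulAut.conjNormal (H := N)) with hρdef
  have hker : ρ.ker = C := by
    ext f
    rw [MonoidHom.mem_ker]
    constructor
    · intro hf
      have hconj : MulAut.conjNormal (H := N) f = 1 := by
        have h1 : (MulAut.congr eN) (MulAut.conjNormal (H := N) f) = 1 := hf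
        have h2 := congrArg (MulAut.congr eN).symm h1
        rwa [MulEquiv.symm_apply_apply, map_one] at h2
      rw [hCdef, Subgroup.mem_centralizer_iff]
      intro g hg
      have := congrArg Subtype.val (DFunLike.congr_fun hconj ⟨g, hg⟩)
      simp only [MulAut.conjNormal_apply, MulAut.one_apply] at this
      -- this : f * g * f⁻¹ = g
      have h2 : f * g = g * f := by
        have := congrArg (fun t => t * f) this
        simpa [mul_assoc] using this
      rw [h2]
    · intro hf
      have hfc : ∀ g ∈ N, g * f = f * g := by
        rw [hCdef, Subgroup.mem_centralizer_iff] at hf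
        exact hf
      have hconj : MulAut.conjNormal (H := N) f = 1 := by
        ext g
        simp only [MulAut.conjNormal_apply, MulAut.one_apply]
        have := (hfc (g : F) g.2).symm
        rw [this]
        group
      show (MulAut.congr eN) (MulAut.conjNormal (H := N) f) = 1
      rw [hconj, map_one]
  -- quotient embeds in automorphisms
  haveI hCnormal : C.Normal := by
    have h := ρ.normal_ker
    rwa [hker] at h
  set σ : (F ⧸ C) →* MulAut (Multiplicative (Fin j → ℤ)) :=
    QuotientGroup.lift C ρ (fun g hg => by rw [← hker] at hg; exact hg) with hσdef
  have hσinj : Function.Injective σ := by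
    rw [injective_iff_map_eq_one]
    intro q hq
    induction q using QuotientGroup.induction_on with
    | H f =>
      have : ρ f = 1 := hq
      have : f ∈ C := by rw [← hker]; exact this
      exact (QuotientGroup.eq_one_iff f).mpr this
  have htors : ∀ q : F ⧸ C, IsOfFinOrder q := by
    intro q
    induction q using QuotientGroup.induction_on with
    | H f =>
      refine isOfFinOrder_iff_pow_eq_one.mpr ⟨N.index, Nat.pos_of_ne_zero hn₀, ?_⟩
      show ((QuotientGroup.mk' C) f) ^ N.index = 1
      rw [← map_pow]
      exact (QuotientGroup.eq_one_iff _).mpr (hNleC (N.pow_index_mem f))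
  obtain ⟨hCfin, hcard⟩ := card_le_of_torsion_into_aut σ hσinj htors
  have hind : C.index ≠ 0 := by
    have : Nat.card (F ⧸ C) ≠ 0 := Nat.card_pos.ne'
    exact this
  refine ⟨C, hCc, hind, ?_, hBle⟩
  calc C.index = Nat.card (F ⧸ C) := rfl
  _ ≤ 3 ^ (j * j) := hcard
  _ ≤ 3 ^ (k * k) := Nat.pow_le_pow_right (by norm_num) (Nat.mul_le_mul hjk hjk)

end Main

section Final

open Subgroup

theorem final_theorem (G : Type) [Group G] [Countable G]
    (htf : Monoid.IsTorsionFree G)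
    (hlva : ∀ H : Subgroup G, Group.FG H → VirtuallyAbelian H)
    (k : ℕ)
    (hk : ∃ H : Subgroup G, Nonempty (H ≃* Multiplicative (Fin k → ℤ)))
    (hmax : ∀ m : ℕ, (∃ H : Subgroup G, Nonempty (H ≃* Multiplicative (Fin m → ℤ))) → m ≤ k) :
    ∃ A : Subgroup G, IsMulCommutative A ∧ A.FiniteIndex ∧ A.Normal ∧ A.Characteristic := by
  classical
  have hfgZ : Group.FG (Multiplicative (Fin k → ℤ)) := by
    refine GroupFG.iff_add_fg.mpr ?_
    have h1 : AddGroup.FG (Fin k → ℤ) := Module.Finite.iff_addGroup_fg.mp inferInstance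
    exact h1
  -- the family of "maximal rank" commutative subgroups
  set 𝒮 : Set (Subgroup G) := {B | IsMulCommutative B ∧
    ∃ H : Subgroup G, H ≤ B ∧ Nonempty (↥H ≃* Multiplicative (Fin k → ℤ))} with h𝒮def
  set U : Set G := ⋃ B ∈ 𝒮, (B : Set G) with hUdef
  set A := Subgroup.closure U with hAdef
  have hmemU : ∀ {g : G} {B : Subgroup G}, B ∈ 𝒮 → g ∈ B → g ∈ U := by
    intro g B hB hg
    rw [hUdef]
    exact Set.mem_biUnion hB hg
  have hmaxF : ∀ (F : Subgroup G) (m : ℕ),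
      (∃ H : Subgroup ↥F, Nonempty (↥H ≃* Multiplicative (Fin m → ℤ))) → m ≤ k := by
    rintro F m ⟨H, ⟨e⟩⟩
    refine hmax m ⟨H.map F.subtype, ⟨MulEquiv.trans ?_ e⟩⟩
    exact (H.equivMapOfInjective F.subtype F.subtype_injective).symm
  -- main lemma applied to a finitely generated subgroup
  have hMAIN : ∀ (F : Subgroup G), F.FG →
      ∃ C : Subgroup ↥F, IsMulCommutative C ∧ C.index ≠ 0 ∧ C.index ≤ 3 ^ (k * k) ∧
        ∀ B : Subgroup ↥F, IsMulCommutative B →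
          (∃ H : Subgroup ↥F, H ≤ B ∧ Nonempty (↥H ≃* Multiplicative (Fin k → ℤ))) → B ≤ C := by
    intro F hFfg
    have hfg : Group.FG ↥F := (Group.fg_iff_subgroup_fg F).mpr hFfg
    exact main_lemma hfg (htf.subgroup F) (hlva F hfg) k (hmaxF F)
  -- members of 𝒮 are finitely generated, being isomorphic to `ℤ^k` up to commutativity data
  have hfgH : ∀ (H : Subgroup G), Nonempty (↥H ≃* Multiplicative (Fin k → ℤ)) → H.FG := by
    rintro H ⟨e⟩
    haveI := hfgZ
    exact (Group.fg_iff_subgroup_fg H).mp (Group.fg_of_surjective (f := e.symm.toMonoidHom)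
      e.symm.surjective)
  -- pairwise commutation of elements of members of 𝒮
  have hpair : ∀ B₁ ∈ 𝒮, ∀ B₂ ∈ 𝒮, ∀ x ∈ B₁, ∀ y ∈ B₂, x * y = y * x := by
    rintro B₁ ⟨hB₁c, H₁, hH₁B, he₁⟩ B₂ ⟨hB₂c, H₂, hH₂B, he₂⟩ x hx y hy
    obtain ⟨S₁, hS₁⟩ := hfgH H₁ he₁
    obtain ⟨S₂, hS₂⟩ := hfgH H₂ he₂
    obtain ⟨e₁⟩ := he₁
    obtain ⟨e₂⟩ := he₂
    set T : Finset G := (S₁ ∪ S₂) ∪ {x, y} with hTdef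
    set F := Subgroup.closure (T : Set G) with hFdef
    have hFfg : F.FG := ⟨T, rfl⟩
    have hH₁F : H₁ ≤ F := by
      rw [← hS₁]
      apply Subgroup.closure_mono
      intro s hs
      simp only [hTdef, Finset.coe_union, Set.mem_union]
      exact Or.inl (Or.inl hs)
    have hH₂F : H₂ ≤ F := by
      rw [← hS₂]
      apply Subgroup.closure_mono
      intro s hs
      simp only [hTdef, Finset.coe_union, Set.mem_union]
      exact Or.inl (Or.inr hs)
    have hxF : x ∈ F := Subgroup.subset_closure (by simp [hTdef])
    have hyF : y ∈ F := Subgroup.subset_closure (by simp [hTdef])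
    obtain ⟨C, hCc, hCind, hCbd, hCforall⟩ := hMAIN F hFfg
    have hBsub : ∀ (B H' : Subgroup G), IsMulCommutative B → H' ≤ B → H' ≤ F →
        (e : ↥H' ≃* Multiplicative (Fin k → ℤ)) → B.subgroupOf F ≤ C := by
      intro B H' hBc hH'B hH'F e
      refine hCforall (B.subgroupOf F) (haveI := hBc; inferInstance)
        ⟨H'.subgroupOf F, ?_, ⟨(Subgroup.subgroupOfEquivOfLe hH'F).trans e⟩⟩
      intro g hg
      rw [Subgroup.mem_subgroupOf] at hg ⊢
      exact hH'B hg
    have hxC : (⟨x, hxF⟩ : ↥F) ∈ C := hBsub B₁ H₁ hB₁c hH₁B hH₁F e₁ (by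
      rw [Subgroup.mem_subgroupOf]; exact hx)
    have hyC : (⟨y, hyF⟩ : ↥F) ∈ C := hBsub B₂ H₂ hB₂c hH₂B hH₂F e₂ (by
      rw [Subgroup.mem_subgroupOf]; exact hy)
    haveI := hCc
    exact congrArg Subtype.val (Subgroup.mul_comm_of_mem_isMulCommutative C hxC hyC)
  -- A is commutative
  have hAc : IsMulCommutative A := by
    refine closure_isCommutative_of_comm U ?_
    intro u hu v hv
    rw [hUdef, Set.mem_iUnion₂] at hu hv
    obtain ⟨B₁, hB₁, hu⟩ := hu
    obtain ⟨B₂, hB₂, hv⟩ := hv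
    exact hpair B₁ hB₁ B₂ hB₂ u hu v hv
  -- A is characteristic
  have himg : ∀ (φ : G ≃* G), φ.toMonoidHom '' U ⊆ U := by
    rintro φ _ ⟨u, hu, rfl⟩
    rw [hUdef, Set.mem_iUnion₂] at hu
    obtain ⟨B, hB, huB⟩ := hu
    obtain ⟨hBc, H, hHB, ⟨e⟩⟩ := hB
    have hmem : B.map φ.toMonoidHom ∈ 𝒮 := by
      refine ⟨(haveI := hBc; inferInstance), H.map φ.toMonoidHom, Subgroup.map_mono hHB,
        ⟨(φ.subgroupMap H).symm.trans e⟩⟩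
    exact hmemU hmem ⟨u, huB, rfl⟩
  have hchar : A.Characteristic := by
    rw [Subgroup.characteristic_iff_map_eq]
    intro φ
    have hUeq : φ.toMonoidHom '' U = U := by
      refine le_antisymm (himg φ) ?_
      intro u hu
      refine ⟨φ.symm u, ?_, by simp⟩
      have := himg φ.symm ⟨u, hu, rfl⟩
      exact this
    rw [hAdef, MonoidHom.map_closure, hUeq]
  haveI := hchar
  haveI hnormal : A.Normal := Subgroup.normal_of_characteristic A
  -- A has finite index
  obtain ⟨H₀, he₀⟩ := hk
  have hH₀c : IsMulCommutative H₀ := by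
    obtain ⟨e₀⟩ := he₀
    constructor; constructor
    intro a b
    apply e₀.injective
    rw [map_mul, map_mul, mul_comm]
  have hH₀𝒮 : H₀ ∈ 𝒮 := ⟨hH₀c, H₀, le_rfl, he₀⟩
  have hfinQ : Finite (G ⧸ A) := by
    by_contra hinf
    haveI : Infinite (G ⧸ A) := not_finite_iff_infinite.mp hinf
    set M := 3 ^ (k * k) with hMdef
    let emb := Infinite.natEmbedding (G ⧸ A)
    set xs : Fin (M + 1) → G := fun i => (emb i).out with hxs
    have hxs_spec : ∀ i, (QuotientGroup.mk (xs i) : G ⧸ A) = emb i := fun i =>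
      QuotientGroup.out_eq' (emb i)
    obtain ⟨S₀, hS₀⟩ := hfgH H₀ he₀
    obtain ⟨e₀⟩ := he₀
    set T : Finset G := S₀ ∪ Finset.image xs Finset.univ with hTdef
    set F := Subgroup.closure (T : Set G) with hFdef
    have hFfg : F.FG := ⟨T, rfl⟩
    have hH₀F : H₀ ≤ F := by
      rw [← hS₀]
      apply Subgroup.closure_mono
      intro s hs
      simp only [hTdef, Finset.coe_union, Set.mem_union]
      exact Or.inl hs
    have hxF : ∀ i, xs i ∈ F := by
      intro i
      apply Subgroup.subset_closure
      simp only [hTdef, Finset.coe_union, Set.mem_union, Finset.coe_image, Set.mem_image]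
      exact Or.inr ⟨i, by simp⟩
    obtain ⟨C, hCc, hCind, hCbd, hCforall⟩ := hMAIN F hFfg
    -- H₀ (inside F) is contained in C
    have hH₀C : H₀.subgroupOf F ≤ C := by
      refine hCforall (H₀.subgroupOf F) (haveI := hH₀c; inferInstance)
        ⟨H₀.subgroupOf F, le_rfl, ⟨(Subgroup.subgroupOfEquivOfLe hH₀F).trans e₀⟩⟩
    -- the image of C in G lies in 𝒮, hence inside A
    set C' := C.map F.subtype with hC'def
    have hC'𝒮 : C' ∈ 𝒮 := by
      refine ⟨(haveI := hCc; inferInstance), H₀, ?_, ⟨e₀⟩⟩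
      have h1 : (H₀.subgroupOf F).map F.subtype ≤ C' := Subgroup.map_mono hH₀C
      rw [Subgroup.subgroupOf_map_subtype, inf_of_le_left hH₀F] at h1
      exact h1
    have hC'A : (C' : Set G) ⊆ (A : Set G) := by
      intro c hc
      exact Subgroup.subset_closure (hmemU hC'𝒮 hc)
    -- pigeonhole in F ⧸ C
    have hQfin : Finite (↥F ⧸ C) := by
      rcases Nat.card_ne_zero.mp hCind with ⟨_, h⟩
      exact h
    haveI := hQfin
    haveI : Fintype (↥F ⧸ C) := Fintype.ofFinite _
    have hcardlt : Fintype.card (↥F ⧸ C) < Fintype.card (Fin (M + 1)) := by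
      rw [Fintype.card_fin]
      have : Nat.card (↥F ⧸ C) = C.index := rfl
      have h2 : Fintype.card (↥F ⧸ C) = C.index := by
        rw [← Nat.card_eq_fintype_card, this]
      omega
    obtain ⟨i, j, hne, heq⟩ := Fintype.exists_ne_map_eq_of_card_lt
      (fun i : Fin (M + 1) => (QuotientGroup.mk (⟨xs i, hxF i⟩ : ↥F) : ↥F ⧸ C)) hcardlt
    -- xs i and xs j lie in the same coset of A
    have hmemC : (⟨xs i, hxF i⟩ : ↥F)⁻¹ * ⟨xs j, hxF j⟩ ∈ C := (QuotientGroup.eq).mp heq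
    have hmemA : (xs i)⁻¹ * xs j ∈ A := by
      apply hC'A
      rw [hC'def]
      exact ⟨_, hmemC, rfl⟩
    have : (QuotientGroup.mk (xs i) : G ⧸ A) = QuotientGroup.mk (xs j) :=
      (QuotientGroup.eq).mpr hmemA
    rw [hxs_spec i, hxs_spec j] at this
    exact hne (Fin.val_injective (emb.injective this))
  haveI := hfinQ
  haveI hAfi : A.FiniteIndex := A.finiteIndex_of_finite_quotient
  exact ⟨A, hAc, hAfi, hnormal, hchar⟩

end Final

/-- **Proposition.** Let `G` be a countable torsion-free locally virtually abelian group, and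
suppose that `G` does not contain free abelian subgroups of arbitrarily high finite rank, i.e.
there is a maximal `k ∈ ℕ` such that `G` has a subgroup isomorphic to `ℤ^k`. Then `G` has an
abelian subgroup of finite index that is normal and characteristic in `G`. -/
theorem countable_torsionFree_locallyVA (G : Type) [Group G] [Countable G]
    (htf : Monoid.IsTorsionFree G) (hlva : LocallyVirtuallyAbelian G)
    (k : ℕ)
    (hk : ∃ H : Subgroup G, Nonempty (H ≃* Multiplicative (Fin k → ℤ)))
    (hmax : ∀ m : ℕ, (∃ H : Subgroup G, Nonempty (H ≃* Multiplicative (Fin m → ℤ))) → m ≤ k) :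
    ∃ A : Subgroup G, IsMulCommutative A ∧ A.FiniteIndex ∧ A.Normal ∧ A.Characteristic :=
  final_theorem G htf hlva k hk hmax
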